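/- Let B be a finite type, P a probability vector on B, 0 < γ₀ ≤ 1, and b_k ∈ B with q := P(b_k) satisfying q ≤ γ₀ and q < 1. Define α := (1 − q/γ₀)/(1 − q) and P⁽ᵏ⁾(b) := α·P(b) + (1 − α)·δ_{b_k}(b), where δ_{b_k}(b) = 1 if b = b_k and 0 otherwise. Then P⁽ᵏ⁾ is a probability vector on B, γ₀·P⁽ᵏ⁾(b) ≤ P(b) for every b ∈ B, and γ₀·P⁽ᵏ⁾(b_k) = P(b_k) (so the constraint is tight at b_k and the induced inverse downsampling rate of P⁽ᵏ⁾ equals γ₀). -/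
import Mathlib


/-- The convex-hull boundary points: P⁽ᵏ⁾ = α·P + (1−α)·δ_{b_k} with
α = (1 − q/γ₀)/(1 − q) is a probability vector satisfying γ₀·P⁽ᵏ⁾(b) ≤ P(b)
everywhere, with equality at b_k. -/
theorem convex_hull_boundary_point {B : Type*} [Fintype B] [DecidableEq B]
    (P : B → ℝ) (hP0 : ∀ b, 0 ≤ P b) (hP1 : ∑ b, P b = 1)
    (γ₀ : ℝ) (hγ0 : 0 < γ₀) (hγ1 : γ₀ ≤ 1)
    (bk : B) (hq : P bk ≤ γ₀) (hq1 : P bk < 1)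
    (α : ℝ) (hα : α = (1 - P bk / γ₀) / (1 - P bk))
    (Pk : B → ℝ)
    (hPk : ∀ b, Pk b = α * P b + (1 - α) * (if b = bk then (1 : ℝ) else 0)) :
    (∀ b, 0 ≤ Pk b) ∧ (∑ b, Pk b = 1) ∧
    (∀ b, γ₀ * Pk b ≤ P b) ∧ γ₀ * Pk bk = P bk := by
  set q := P bk with hqdef
  have hq0 : 0 ≤ q := hP0 bk
  have hden : 0 < 1 - q := by linarith
  have hα0 : 0 ≤ α := by
    rw [hα]
    apply div_nonneg _ hden.le
    have : q / γ₀ ≤ 1 := (div_le_one hγ0).mpr hq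
    linarith
  have hα1 : α ≤ 1 := by
    rw [hα, div_le_one hden]
    have : q ≤ q / γ₀ := by
      rw [le_div_iff₀ hγ0]
      nlinarith
    linarith
  have heq : γ₀ * Pk bk = q := by
    rw [hPk bk, if_pos rfl, hα]
    field_simp
    ring
  refine ⟨?_, ?_, ?_, heq⟩
  · intro b
    rw [hPk b]
    have := hP0 b
    split <;> nlinarith
  · have : ∑ b, Pk b = α * (∑ b, P b) + (1 - α) * ∑ b, (if b = bk then (1:ℝ) else 0) := by
      rw [Finset.mul_sum, Finset.mul_sum, ← Finset.sum_add_distrib]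
      exact Finset.sum_congr rfl fun b _ => hPk b
    rw [this, hP1, Finset.sum_ite_eq' Finset.univ bk (fun _ => (1:ℝ)),
      if_pos (Finset.mem_univ bk)]
    ring
  · intro b
    by_cases hb : b = bk
    · subst hb; rw [heq]
    · rw [hPk b, if_neg hb]
      have h1 : γ₀ * α ≤ 1 := by nlinarith
      nlinarith [mul_le_of_le_one_left (hP0 b) h1]
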